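/- Fix ρ ≥ 0. Then the function z ↦ g(ρ,z) is nonincreasing and concave on the interval [0,1]. -/

import Mathlib

open Real

/-- Gallager's `g` function: `g ρ z = ((1/2)(1+z)^{1/(1+ρ)} + (1/2)(1-z)^{1/(1+ρ)})^{1+ρ}`. -/
noncomputable def g (ρ z : ℝ) : ℝ :=
  ((1/2) * (1 + z) ^ (1/(1+ρ)) + (1/2) * (1 - z) ^ (1/(1+ρ))) ^ (1+ρ)

/-- Gallager's `E0` of a binary-input channel `W` (input `false` is 0, `true` is 1)
under the uniform input distribution. -/
noncomputable def E0 {Y : Type*} [Fintype Y] (ρ : ℝ) (W : Bool → Y → ℝ) : ℝ :=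
  - Real.log (∑ y, ((1/2) * (W false y) ^ (1/(1+ρ)) + (1/2) * (W true y) ^ (1/(1+ρ))) ^ (1+ρ))

/-- `q_W(y) = (W(y|0)+W(y|1))/2`. -/
noncomputable def qW {Y : Type*} (W : Bool → Y → ℝ) (y : Y) : ℝ :=
  (W false y + W true y) / 2

/-- `Δ_W(y) = (W(y|0) - W(y|1))/(W(y|0)+W(y|1))`. -/
noncomputable def ΔW {Y : Type*} (W : Bool → Y → ℝ) (y : Y) : ℝ :=
  (W false y - W true y) / (W false y + W true y)

/-- The minus polar transform of two channels. -/
noncomputable def Wminus {Y1 Y2 : Type*} (W1 : Bool → Y1 → ℝ) (W2 : Bool → Y2 → ℝ) :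
    Bool → Y1 × Y2 → ℝ :=
  fun u1 y => ∑ u2 : Bool, (1/2) * W1 (xor u1 u2) y.1 * W2 u2 y.2

/-- The plus polar transform of two channels; output is `(y1, y2, u1)`. -/
noncomputable def Wplus {Y1 Y2 : Type*} (W1 : Bool → Y1 → ℝ) (W2 : Bool → Y2 → ℝ) :
    Bool → Y1 × Y2 × Bool → ℝ :=
  fun u2 y => (1/2) * W1 (xor y.2.2 u2) y.1 * W2 u2 y.2.1

/-- The function `h(ρ, z1, z2)` from the `W⁺` representation. -/
noncomputable def hfun (ρ z1 z2 : ℝ) : ℝ :=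
  (1/2) * (1 + z1*z2) * g ρ ((z1 + z2)/(1 + z1*z2))
    + (1/2) * (1 - z1*z2) * g ρ ((z1 - z2)/(1 - z1*z2))


noncomputable def gphi (α z : ℝ) : ℝ := (1/2)*(1+z)^α + (1/2)*(1-z)^α
noncomputable def gphi' (α z : ℝ) : ℝ := (1/2)*α*(1+z)^(α-1) - (1/2)*α*(1-z)^(α-1)
noncomputable def gphi'' (α z : ℝ) : ℝ :=
  (1/2)*α*(α-1)*(1+z)^(α-2) + (1/2)*α*(α-1)*(1-z)^(α-2)
noncomputable def gGd (ρ α z : ℝ) : ℝ := (1+ρ) * (gphi α z)^ρ * gphi' α z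
noncomputable def gGdd (ρ α z : ℝ) : ℝ :=
  (1+ρ) * (ρ * (gphi α z)^(ρ-1) * gphi' α z * gphi' α z + (gphi α z)^ρ * gphi'' α z)

lemma gphi_pos {α z : ℝ} (ha : 0 < 1+z) (hb : 0 < 1-z) : 0 < gphi α z := by
  have h1 := Real.rpow_pos_of_pos ha α
  have h2 := Real.rpow_pos_of_pos hb α
  unfold gphi; linarith

lemma gphi_hasDeriv {α z : ℝ} (ha : 0 < 1+z) (hb : 0 < 1-z) :
    HasDerivAt (fun z => gphi α z) (gphi' α z) z := by
  have h1 : HasDerivAt (fun z : ℝ => 1 + z) 1 z := by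
    simpa using (hasDerivAt_id z).const_add 1
  have h2 : HasDerivAt (fun z : ℝ => 1 - z) (-1) z := by
    simpa using (hasDerivAt_id z).const_sub 1
  have h3 : HasDerivAt (fun z : ℝ => (1+z)^α) (α * (1+z)^(α-1)) z := by
    have := (Real.hasDerivAt_rpow_const (x := 1+z) (p := α) (Or.inl ha.ne')).comp z h1
    exact this.congr_deriv (by ring)
  have h4 : HasDerivAt (fun z : ℝ => (1-z)^α) (-(α * (1-z)^(α-1))) z := by
    have := (Real.hasDerivAt_rpow_const (x := 1-z) (p := α) (Or.inl hb.ne')).comp z h2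
    exact this.congr_deriv (by ring)
  have := (h3.const_mul (1/2 : ℝ)).add (h4.const_mul (1/2 : ℝ))
  unfold gphi gphi'
  exact this.congr_deriv (by ring)

lemma gphi'_hasDeriv {α z : ℝ} (ha : 0 < 1+z) (hb : 0 < 1-z) :
    HasDerivAt (fun z => gphi' α z) (gphi'' α z) z := by
  have h1 : HasDerivAt (fun z : ℝ => 1 + z) 1 z := by
    simpa using (hasDerivAt_id z).const_add 1
  have h2 : HasDerivAt (fun z : ℝ => 1 - z) (-1) z := by
    simpa using (hasDerivAt_id z).const_sub 1
  have h3 : HasDerivAt (fun z : ℝ => (1+z)^(α-1)) ((α-1) * (1+z)^(α-1-1)) z := by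
    have := (Real.hasDerivAt_rpow_const (x := 1+z) (p := α-1) (Or.inl ha.ne')).comp z h1
    exact this.congr_deriv (by ring)
  have h4 : HasDerivAt (fun z : ℝ => (1-z)^(α-1)) (-((α-1) * (1-z)^(α-1-1))) z := by
    have := (Real.hasDerivAt_rpow_const (x := 1-z) (p := α-1) (Or.inl hb.ne')).comp z h2
    exact this.congr_deriv (by ring)
  have := (h3.const_mul ((1/2)*α : ℝ)).sub (h4.const_mul ((1/2)*α : ℝ))
  unfold gphi' gphi''
  have he : α - 1 - 1 = α - 2 := by ring
  rw [he] at this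
  exact this.congr_deriv (by ring)

lemma gG_hasDeriv {ρ α z : ℝ} (ha : 0 < 1+z) (hb : 0 < 1-z) :
    HasDerivAt (fun z => (gphi α z)^(1+ρ)) (gGd ρ α z) z := by
  have hF := gphi_pos (α := α) ha hb
  have := (Real.hasDerivAt_rpow_const (x := gphi α z) (p := 1+ρ)
      (Or.inl hF.ne')).comp z (gphi_hasDeriv ha hb)
  have he : 1 + ρ - 1 = ρ := by ring
  rw [he] at this
  exact this

lemma gGd_hasDeriv {ρ α z : ℝ} (ha : 0 < 1+z) (hb : 0 < 1-z) :
    HasDerivAt (fun z => gGd ρ α z) (gGdd ρ α z) z := by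
  have hF := gphi_pos (α := α) ha hb
  have hpow : HasDerivAt (fun z => (gphi α z)^ρ) (ρ * (gphi α z)^(ρ-1) * gphi' α z) z := by
    have := (Real.hasDerivAt_rpow_const (x := gphi α z) (p := ρ)
        (Or.inl hF.ne')).comp z (gphi_hasDeriv ha hb)
    exact this
  have key := ((hpow.mul (gphi'_hasDeriv (α := α) ha hb)).const_mul (1+ρ : ℝ))
  have hfun : (fun z => gGd ρ α z) = fun y => (1+ρ) * (gphi α y ^ ρ * gphi' α y) := by
    funext y; unfold gGd; ring
  rw [hfun]
  exact key.congr_deriv (by unfold gGdd; ring)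

lemma gphi'_nonpos {α z : ℝ} (hα0 : 0 < α) (hα1 : α ≤ 1) (hb : 0 < 1-z) (hz : 0 ≤ z) :
    gphi' α z ≤ 0 := by
  have h1 : (1+z:ℝ) ^ (α-1) ≤ (1-z) ^ (α-1) :=
    Real.rpow_le_rpow_of_nonpos hb (by linarith) (by linarith)
  unfold gphi'
  nlinarith [mul_nonneg hα0.le (sub_nonneg.2 h1)]

lemma gGdd_nonpos {ρ α z : ℝ} (hρ : 0 ≤ ρ) (hα : α = 1/(1+ρ))
    (ha : 0 < 1+z) (hb : 0 < 1-z) : gGdd ρ α z ≤ 0 := by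
  have h1ρ : (0:ℝ) < 1 + ρ := by linarith
  have hα0 : 0 < α := by rw [hα]; positivity
  have hα1 : α ≤ 1 := by rw [hα, div_le_one h1ρ]; linarith
  have hρα : ρ * α = 1 - α := by rw [hα]; field_simp; ring
  have hF : 0 < gphi α z := gphi_pos ha hb
  have hFne : ((1/2)*(1+z)^α + (1/2)*(1-z)^α : ℝ) ≠ 0 := by
    have : gphi α z = (1/2)*(1+z)^α + (1/2)*(1-z)^α := rfl
    rw [← this]; exact hF.ne'
  have hFρ : ((1/2)*(1+z)^α + (1/2)*(1-z)^α : ℝ)^ρ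
      = ((1/2)*(1+z)^α + (1/2)*(1-z)^α : ℝ)^(ρ-1) * ((1/2)*(1+z)^α + (1/2)*(1-z)^α) := by
    rw [← Real.rpow_add_one hFne (ρ-1)]
    congr 1; ring
  -- atoms
  have e1 : (1+z:ℝ)^(α-1) * (1+z)^(α-1) = (1+z)^α * (1+z)^(α-2) := by
    rw [← Real.rpow_add ha, ← Real.rpow_add ha]; congr 1; ring
  have e2 : (1-z:ℝ)^(α-1) * (1-z)^(α-1) = (1-z)^α * (1-z)^(α-2) := by
    rw [← Real.rpow_add hb, ← Real.rpow_add hb]; congr 1; ring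
  have hp := (Real.rpow_pos_of_pos ha (α-1)).le
  have hq := (Real.rpow_pos_of_pos hb (α-1)).le
  have hA := (Real.rpow_pos_of_pos ha α).le
  have hB := (Real.rpow_pos_of_pos hb α).le
  have hP := (Real.rpow_pos_of_pos ha (α-2)).le
  have hQ := (Real.rpow_pos_of_pos hb (α-2)).le
  have hK : ((1+z:ℝ)^(α-1) - (1-z)^(α-1))^2
      - ((1+z)^α + (1-z)^α) * ((1+z)^(α-2) + (1-z)^(α-2)) ≤ 0 := by
    nlinarith [mul_nonneg hp hq, mul_nonneg hA hQ, mul_nonneg hB hP, e1, e2]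
  have hE : (0:ℝ) ≤ ((1/2)*(1+z)^α + (1/2)*(1-z)^α : ℝ)^(ρ-1) := by
    apply Real.rpow_nonneg
    have : gphi α z = (1/2)*(1+z)^α + (1/2)*(1-z)^α := rfl
    rw [← this]; exact hF.le
  have hC : (0:ℝ) ≤ (1+ρ) * ((1/2)*(1+z)^α + (1/2)*(1-z)^α : ℝ)^(ρ-1) * (α/4) * (1-α) := by
    have := mul_nonneg (mul_nonneg (mul_nonneg h1ρ.le hE) (by linarith : (0:ℝ) ≤ α/4)) (by linarith : (0:ℝ) ≤ 1-α)
    linarith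
  have hfinal : gGdd ρ α z
      = ((1+ρ) * ((1/2)*(1+z)^α + (1/2)*(1-z)^α : ℝ)^(ρ-1) * (α/4) * (1-α))
        * (((1+z:ℝ)^(α-1) - (1-z)^(α-1))^2
          - ((1+z)^α + (1-z)^α) * ((1+z)^(α-2) + (1-z)^(α-2))) := by
    unfold gGdd gphi gphi' gphi''
    rw [hFρ]
    linear_combination ((1+ρ) * ((1/2)*(1+z)^α + (1/2)*(1-z)^α : ℝ)^(ρ-1) * (α/4)
      * ((1+z:ℝ)^(α-1) - (1-z)^(α-1))^2) * hρα
  rw [hfinal]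
  exact mul_nonpos_iff.2 (Or.inl ⟨hC, hK⟩)

lemma gphi_continuous {α : ℝ} (hα0 : 0 ≤ α) : Continuous fun z => gphi α z := by
  unfold gphi
  exact (continuous_const.mul
      ((continuous_const.add continuous_id).rpow_const fun _ => Or.inr hα0)).add
    (continuous_const.mul
      ((continuous_const.sub continuous_id).rpow_const fun _ => Or.inr hα0))

theorem g_antitone_concave (ρ : ℝ) (hρ : 0 ≤ ρ) :
    AntitoneOn (fun z => g ρ z) (Set.Icc (0:ℝ) 1) ∧
      ConcaveOn ℝ (Set.Icc (0:ℝ) 1) (fun z => g ρ z) := by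
  have h1ρ : (0:ℝ) < 1+ρ := by linarith
  have hα0 : (0:ℝ) < 1/(1+ρ) := by positivity
  have hα1 : 1/(1+ρ) ≤ 1 := by rw [div_le_one h1ρ]; linarith
  have hfun : (fun z => g ρ z) = fun z => (gphi (1/(1+ρ)) z)^(1+ρ) := rfl
  have hcont : ContinuousOn (fun z => g ρ z) (Set.Icc 0 1) := by
    rw [hfun]
    exact ((gphi_continuous hα0.le).rpow_const fun _ => Or.inr h1ρ.le).continuousOn
  have hmem : ∀ x ∈ interior (Set.Icc (0:ℝ) 1), 0 < 1+x ∧ 0 < 1-x ∧ 0 ≤ x := by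
    intro x hx; rw [interior_Icc] at hx
    exact ⟨by linarith [hx.1], by linarith [hx.2], hx.1.le⟩
  have hd1 : ∀ x ∈ interior (Set.Icc (0:ℝ) 1),
      HasDerivWithinAt (fun z => g ρ z) (gGd ρ (1/(1+ρ)) x) (interior (Set.Icc (0:ℝ) 1)) x := by
    intro x hx
    obtain ⟨ha, hb, _⟩ := hmem x hx
    have : HasDerivAt (fun z => g ρ z) (gGd ρ (1/(1+ρ)) x) x := by
      rw [hfun]; exact gG_hasDeriv ha hb
    exact this.hasDerivWithinAt
  constructor
  · apply antitoneOn_of_hasDerivWithinAt_nonpos (convex_Icc 0 1) hcont hd1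
    intro x hx
    obtain ⟨ha, hb, hz⟩ := hmem x hx
    have h1 := gphi'_nonpos hα0 hα1 hb hz
    have h2 : 0 ≤ (1+ρ) * (gphi (1/(1+ρ)) x)^ρ :=
      mul_nonneg h1ρ.le (Real.rpow_nonneg (gphi_pos ha hb).le ρ)
    unfold gGd
    exact mul_nonpos_iff.2 (Or.inl ⟨h2, h1⟩)
  · apply concaveOn_of_hasDerivWithinAt2_nonpos (convex_Icc 0 1) hcont hd1
      (f'' := fun z => gGdd ρ (1/(1+ρ)) z)
    · intro x hx
      obtain ⟨ha, hb, _⟩ := hmem x hx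
      exact (gGd_hasDeriv ha hb).hasDerivWithinAt
    · intro x hx
      obtain ⟨ha, hb, _⟩ := hmem x hx
      exact gGdd_nonpos hρ rfl ha hb
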